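/- arXiv:math/0509272 — 2 statements merged into one kernel-verified Lean document; each statement's English description precedes it below -/
import Mathlib

section
/- Let R be a commutative ring and 0 → E₋₁ → E₀ → ⋯ → E_{l+1} → 0 an exact sequence of R-modules. If E₋₁ is free and for each i with 0 ≤ i ≤ l the projective dimension of E_i is at most i, then the projective dimension of E_{l+1} is at most l+1. -/
/-- `ProjDimLE R n M` says that the `R`-module `M` has projective dimension at most `n`:
for `n = 0` this means `M` is projective, and for `n+1` it means `M` admits a surjection
from a projective module whose kernel has projective dimension at most `n`. -/
def ProjDimLE (R : Type) [CommRing R] : ℕ → ModuleCat R → Prop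
  | 0, M => Module.Projective R M
  | n + 1, M => ∃ (P : ModuleCat R) (g : P →ₗ[R] M),
      Module.Projective R P ∧ Function.Surjective g ∧
      ProjDimLE R n (ModuleCat.of R (LinearMap.ker g))

section Aux

universe v

variable {R : Type} [CommRing R]

theorem projDimLE_zero_iff (M : ModuleCat.{v} R) :
    ProjDimLE R 0 M ↔ Module.Projective R M := by
  constructor <;> intro h <;> exact h

theorem projDimLE_succ_iff (n : ℕ) (M : ModuleCat.{v} R) :
    ProjDimLE R (n + 1) M ↔ ∃ (P : ModuleCat.{v} R) (g : P →ₗ[R] M),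
      Module.Projective R P ∧ Function.Surjective g ∧
      ProjDimLE R n (ModuleCat.of R (LinearMap.ker g)) := by
  constructor <;> intro h <;> exact h

/-- `ProjDimLE` is invariant under linear equivalence. -/
theorem projDimLE_congr (n : ℕ) (M N : ModuleCat.{v} R) (e : M ≃ₗ[R] N)
    (h : ProjDimLE R n M) : ProjDimLE R n N := by
  induction n generalizing M N with
  | zero =>
    rw [projDimLE_zero_iff] at h ⊢
    exact letI := h; Module.Projective.of_equiv e
  | succ n ih =>
    rw [projDimLE_succ_iff] at h ⊢
    obtain ⟨P, g, hP, hg, hk⟩ := h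
    refine ⟨P, e.toLinearMap ∘ₗ g, hP, e.surjective.comp hg, ?_⟩
    refine ih (ModuleCat.of R ↥(LinearMap.ker g))
      (ModuleCat.of R ↥(LinearMap.ker (e.toLinearMap ∘ₗ g)))
      (LinearEquiv.ofEq _ _ ?_) hk
    rw [LinearMap.ker_comp,
      show LinearMap.ker e.toLinearMap = ⊥ from LinearMap.ker_eq_bot.mpr e.injective,
      Submodule.comap_bot]

theorem projDimLE_of_subsingleton (n : ℕ) (M : ModuleCat.{v} R) [hs : Subsingleton M] :
    ProjDimLE R n M := by
  induction n generalizing M with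
  | zero => rw [projDimLE_zero_iff]; infer_instance
  | succ n ih =>
    rw [projDimLE_succ_iff]
    refine ⟨M, LinearMap.id, inferInstance, Function.surjective_id, ?_⟩
    haveI : Subsingleton ↑(ModuleCat.of R ↥(LinearMap.ker (LinearMap.id : M →ₗ[R] M))) :=
      ⟨fun a b => Subtype.ext (Subsingleton.elim _ _)⟩
    exact ih (ModuleCat.of R ↥(LinearMap.ker (LinearMap.id : M →ₗ[R] M)))

theorem ProjDimLE.succ {n : ℕ} {M : ModuleCat.{v} R} (h : ProjDimLE R n M) :
    ProjDimLE R (n + 1) M := by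
  induction n generalizing M with
  | zero =>
    rw [projDimLE_zero_iff] at h
    rw [projDimLE_succ_iff]
    refine ⟨M, LinearMap.id, h, Function.surjective_id, ?_⟩
    haveI : Subsingleton ↑(ModuleCat.of R ↥(LinearMap.ker (LinearMap.id : M →ₗ[R] M))) :=
      ⟨fun a b => Subtype.ext (by
        have ha : a.1 = 0 := a.2
        have hb : b.1 = 0 := b.2
        rw [ha, hb])⟩
    exact projDimLE_of_subsingleton 0 (ModuleCat.of R ↥(LinearMap.ker (LinearMap.id : M →ₗ[R] M)))
  | succ n ih =>
    rw [projDimLE_succ_iff] at h ⊢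
    obtain ⟨P, g, hP, hg, hk⟩ := h
    exact ⟨P, g, hP, hg, ih hk⟩

/-- Closedness under extensions: if `g : B → C` is surjective with
`ProjDimLE n (ker g)` and `ProjDimLE n C`, then `ProjDimLE n B`. -/
theorem projDimLE_of_surjective : ∀ (n : ℕ) (B C : ModuleCat.{v} R) (g : B →ₗ[R] C),
    Function.Surjective g → ProjDimLE R n (ModuleCat.of R (LinearMap.ker g)) →
    ProjDimLE R n C → ProjDimLE R n B := by
  intro n
  induction n with
  | zero =>
    intro B C g hg hker hC
    rw [projDimLE_zero_iff] at hker hC ⊢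
    letI : Module.Projective R ↥(LinearMap.ker g) := hker
    letI : Module.Projective R C := hC
    obtain ⟨s, hs⟩ := Module.projective_lifting_property g LinearMap.id hg
    have hsg : ∀ c : C, g (s c) = c := fun c => congrFun (congrArg (·.toFun) hs) c
    have hmem : ∀ b : B, ((LinearMap.id : B →ₗ[R] B) - s ∘ₗ g) b ∈ LinearMap.ker g := by
      intro b
      simp [LinearMap.mem_ker, LinearMap.sub_apply, hsg]
    refine Module.Projective.of_split (M := ↥(LinearMap.ker g) × C)
      (LinearMap.prod
        (((LinearMap.id : B →ₗ[R] B) - s ∘ₗ g).codRestrict (LinearMap.ker g) hmem) g)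
      (LinearMap.coprod (LinearMap.ker g).subtype s) ?_
    ext b
    simp [LinearMap.sub_apply, sub_add_cancel]
  | succ n ih =>
    intro B C g hg hker hC
    rw [projDimLE_succ_iff] at hker hC ⊢
    obtain ⟨P, π, hP, hπ, hLC⟩ := hC
    obtain ⟨Q, ρ₀, hQ, hρ₀, hLA⟩ := hker
    -- recast `ρ₀` as a map into the kernel of `g`
    let ρ : ↑Q →ₗ[R] ↥(LinearMap.ker g) := ρ₀
    have hρ : Function.Surjective ρ := hρ₀
    have hLA' : ProjDimLE R n (ModuleCat.of R ↥(LinearMap.ker ρ)) := hLA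
    obtain ⟨σ, hσ⟩ := Module.projective_lifting_property g π hg
    have hσg : ∀ p : ↑P, g (σ p) = π p := fun p => congrFun (congrArg (·.toFun) hσ) p
    set h : (↑Q × ↑P) →ₗ[R] B :=
      LinearMap.coprod ((LinearMap.ker g).subtype ∘ₗ ρ) σ with hhdef
    have hval : ∀ x : ↑Q × ↑P, h x = ((ρ x.1 : B) + σ x.2) := fun x => rfl
    have hsurj : Function.Surjective h := by
      intro b
      obtain ⟨p, hp⟩ := hπ (g b)
      have hbk : b - σ p ∈ LinearMap.ker g := by
        simp [LinearMap.mem_ker, hσg, hp]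
      obtain ⟨q, hq⟩ := hρ ⟨b - σ p, hbk⟩
      refine ⟨(q, p), ?_⟩
      rw [hval]
      rw [hq]
      simp
    refine ⟨ModuleCat.of R (↑Q × ↑P), h,
      (letI : Module.Projective R ↑Q := hQ; letI : Module.Projective R ↑P := hP;
        inferInstanceAs (Module.Projective R (↑Q × ↑P))), hsurj, ?_⟩
    -- the kernel of `h` is an extension of `ker π` by `ker ρ`
    have hπ0 : ∀ x : ↥(LinearMap.ker h),
        ((LinearMap.snd R ↑Q ↑P) ∘ₗ (LinearMap.ker h).subtype) x ∈ LinearMap.ker π := by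
      intro x
      have hx : (ρ x.1.1 : B) + σ x.1.2 = 0 := x.2
      have hgx : g ((ρ x.1.1 : B) + σ x.1.2) = 0 := by rw [hx]; simp
      have h1 : g (ρ x.1.1 : B) = 0 := (ρ x.1.1).2
      rw [map_add, h1, zero_add] at hgx
      simpa [LinearMap.mem_ker, hσg] using hgx
    set q' : ↥(LinearMap.ker h) →ₗ[R] ↥(LinearMap.ker π) :=
      LinearMap.codRestrict (LinearMap.ker π)
        ((LinearMap.snd R ↑Q ↑P) ∘ₗ (LinearMap.ker h).subtype) hπ0 with hq'def
    have hq'val : ∀ x : ↥(LinearMap.ker h), (q' x : ↑P) = x.1.2 := fun _ => rfl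
    have hq'surj : Function.Surjective q' := by
      intro z
      have hz : π (z : ↑P) = 0 := z.2
      have hσz : σ (z : ↑P) ∈ LinearMap.ker g := by
        simp [LinearMap.mem_ker, hσg, hz]
      obtain ⟨q, hq⟩ := hρ ⟨-σ (z : ↑P), by simpa using neg_mem hσz⟩
      have hmem : (q, (z : ↑P)) ∈ LinearMap.ker h := by
        have hρq : (ρ q : B) = -σ (z : ↑P) := by rw [hq]
        rw [LinearMap.mem_ker, hval, hρq]
        simp
      exact ⟨⟨(q, (z : ↑P)), hmem⟩, Subtype.ext rfl⟩
    refine ih (ModuleCat.of R ↥(LinearMap.ker h)) (ModuleCat.of R ↥(LinearMap.ker π))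
      q' hq'surj ?_ hLC
    -- `ker q'` is isomorphic to `ker ρ`
    have hm0 : ∀ y : ↥(LinearMap.ker ρ),
        (LinearMap.prod (LinearMap.ker ρ).subtype (0 : ↥(LinearMap.ker ρ) →ₗ[R] ↑P)) y
          ∈ LinearMap.ker h := by
      intro y
      have hy : ρ (y : ↑Q) = 0 := y.2
      rw [LinearMap.mem_ker]
      show (ρ (y : ↑Q) : B) + σ 0 = 0
      rw [hy]
      simp
    set m1 : ↥(LinearMap.ker ρ) →ₗ[R] ↥(LinearMap.ker h) :=
      LinearMap.codRestrict (LinearMap.ker h)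
        (LinearMap.prod (LinearMap.ker ρ).subtype 0) hm0 with hm1def
    have hm1mem : ∀ y, m1 y ∈ LinearMap.ker q' := fun y => Subtype.ext rfl
    set θ : ↥(LinearMap.ker ρ) →ₗ[R] ↥(LinearMap.ker q') :=
      LinearMap.codRestrict (LinearMap.ker q') m1 hm1mem with hθdef
    have hθbij : Function.Bijective θ := by
      constructor
      · intro y y' hyy'
        have h1 : m1 y = m1 y' := congrArg Subtype.val hyy'
        have h2 : ((y : ↑Q), (0 : ↑P)) = ((y' : ↑Q), (0 : ↑P)) :=
          congrArg Subtype.val h1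
        exact Subtype.ext (congrArg Prod.fst h2)
      · intro z
        have hzz : q' (z : ↥(LinearMap.ker h)) = 0 := z.2
        have hz2 : ((z : ↥(LinearMap.ker h)) : ↑Q × ↑P).2 = 0 := by
          have h3 : ((q' (z : ↥(LinearMap.ker h))) : ↑P) = 0 := by rw [hzz]; rfl
          exact h3
        have hzh : (ρ ((z : ↥(LinearMap.ker h)) : ↑Q × ↑P).1 : B)
            + σ ((z : ↥(LinearMap.ker h)) : ↑Q × ↑P).2 = 0 :=
          (z : ↥(LinearMap.ker h)).2
        have hρ0 : ρ ((z : ↥(LinearMap.ker h)) : ↑Q × ↑P).1 = 0 := by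
          rw [hz2, map_zero, add_zero] at hzh
          exact Subtype.ext hzh
        refine ⟨⟨((z : ↥(LinearMap.ker h)) : ↑Q × ↑P).1, hρ0⟩, ?_⟩
        apply Subtype.ext
        apply Subtype.ext
        exact Prod.ext rfl hz2.symm
    exact projDimLE_congr n (ModuleCat.of R ↥(LinearMap.ker ρ))
      (ModuleCat.of R ↥(LinearMap.ker q')) (LinearEquiv.ofBijective θ hθbij) hLA'

/-- If `g : M → N` is surjective, `ProjDimLE n (ker g)` and `ProjDimLE n M`,
then `ProjDimLE (n+1) N`. -/
theorem projDimLE_quotient (n : ℕ) (M N : ModuleCat.{v} R) (g : M →ₗ[R] N)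
    (hg : Function.Surjective g)
    (hker : ProjDimLE R n (ModuleCat.of R (LinearMap.ker g)))
    (hM : ProjDimLE R n M) : ProjDimLE R (n + 1) N := by
  cases n with
  | zero =>
    rw [projDimLE_zero_iff] at hM
    rw [projDimLE_succ_iff]
    exact ⟨M, g, hM, hg, hker⟩
  | succ n =>
    rw [projDimLE_succ_iff] at hM
    obtain ⟨P, π, hP, hπ, hL⟩ := hM
    rw [projDimLE_succ_iff]
    refine ⟨P, g ∘ₗ π, hP, hg.comp hπ, ?_⟩
    have hmem : ∀ x : ↥(LinearMap.ker (g ∘ₗ π)),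
        (π ∘ₗ (LinearMap.ker (g ∘ₗ π)).subtype) x ∈ LinearMap.ker g := by
      intro x
      have hx := x.2
      rw [LinearMap.mem_ker, LinearMap.comp_apply] at hx
      simpa [LinearMap.mem_ker] using hx
    set q : ↥(LinearMap.ker (g ∘ₗ π)) →ₗ[R] ↥(LinearMap.ker g) :=
      LinearMap.codRestrict (LinearMap.ker g)
        (π ∘ₗ (LinearMap.ker (g ∘ₗ π)).subtype) hmem with hqdef
    have hqval : ∀ x, (q x : ↑M) = π x.1 := fun _ => rfl
    have hqsurj : Function.Surjective q := by
      intro k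
      obtain ⟨x, hx⟩ := hπ (k : ↑M)
      have hxk : x ∈ LinearMap.ker (g ∘ₗ π) := by
        rw [LinearMap.mem_ker, LinearMap.comp_apply, hx]
        exact k.2
      exact ⟨⟨x, hxk⟩, Subtype.ext hx⟩
    refine projDimLE_of_surjective (n + 1) (ModuleCat.of R ↥(LinearMap.ker (g ∘ₗ π)))
      (ModuleCat.of R ↥(LinearMap.ker g)) q hqsurj ?_ hker
    -- `ker q` is isomorphic to `ker π`
    have hm : ∀ y : ↥(LinearMap.ker π),
        (LinearMap.ker π).subtype y ∈ LinearMap.ker (g ∘ₗ π) := by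
      intro y
      have hy : π (y : ↑P) = 0 := y.2
      rw [LinearMap.mem_ker, LinearMap.comp_apply]
      show g (π (y : ↑P)) = 0
      rw [hy, map_zero]
    set m1 : ↥(LinearMap.ker π) →ₗ[R] ↥(LinearMap.ker (g ∘ₗ π)) :=
      LinearMap.codRestrict (LinearMap.ker (g ∘ₗ π)) (LinearMap.ker π).subtype hm with hm1def
    have hm1mem : ∀ y, m1 y ∈ LinearMap.ker q := by
      intro y
      have hy : π (y : ↑P) = 0 := y.2
      exact Subtype.ext hy
    set θ : ↥(LinearMap.ker π) →ₗ[R] ↥(LinearMap.ker q) :=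
      LinearMap.codRestrict (LinearMap.ker q) m1 hm1mem with hθdef
    have hθbij : Function.Bijective θ := by
      constructor
      · intro y y' hyy'
        have h1 : m1 y = m1 y' := congrArg Subtype.val hyy'
        have h2 : ((m1 y : ↥(LinearMap.ker (g ∘ₗ π))) : ↑P)
            = ((m1 y' : ↥(LinearMap.ker (g ∘ₗ π))) : ↑P) := congrArg Subtype.val h1
        exact Subtype.ext h2
      · intro z
        have hzz : q (z : ↥(LinearMap.ker (g ∘ₗ π))) = 0 := z.2
        have hz : π ((z : ↥(LinearMap.ker (g ∘ₗ π))) : ↑P) = 0 := by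
          have h3 : ((q (z : ↥(LinearMap.ker (g ∘ₗ π)))) : ↑M) = 0 := by rw [hzz]; rfl
          exact h3
        exact ⟨⟨((z : ↥(LinearMap.ker (g ∘ₗ π))) : ↑P), hz⟩,
          Subtype.ext (Subtype.ext rfl)⟩
    exact projDimLE_congr (n + 1) (ModuleCat.of R ↥(LinearMap.ker π))
      (ModuleCat.of R ↥(LinearMap.ker q)) (LinearEquiv.ofBijective θ hθbij)
      (ProjDimLE.succ hL)

end Aux

/-- Let `R` be a commutative ring and `0 → E₋₁ → E₀ → ⋯ → E_{l+1} → 0` an exact sequence of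
`R`-modules (here `E i` denotes `E_{i-1}`, so the sequence runs over `E 0, …, E (l+2)`).
If `E₋₁` is free and for each `0 ≤ i ≤ l` the projective dimension of `E_i` is at most `i`,
then the projective dimension of `E_{l+1}` is at most `l + 1`. -/
theorem projDim_of_exact_sequence
    {R : Type} [CommRing R] (l : ℕ)
    (E : ℕ → ModuleCat R)
    (f : ∀ i : ℕ, E i →ₗ[R] E (i + 1))
    (hinj : Function.Injective (f 0))
    (hsurj : Function.Surjective (f (l + 1)))
    (hexact : ∀ i : ℕ, i ≤ l → LinearMap.range (f i) = LinearMap.ker (f (i + 1)))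
    (hfree : Module.Free R (E 0))
    (hpd : ∀ i : ℕ, i ≤ l → ProjDimLE R i (E (i + 1))) :
    ProjDimLE R (l + 1) (E (l + 2)) := by
  have claim : ∀ i : ℕ, i ≤ l →
      ProjDimLE R i (ModuleCat.of R (LinearMap.range (f i))) := by
    intro i
    induction i with
    | zero =>
      intro _
      rw [projDimLE_zero_iff]
      letI := hfree
      letI : Module.Projective R (E 0) := inferInstance
      exact Module.Projective.of_equiv (LinearEquiv.ofInjective (f 0) hinj)
    | succ i ih =>
      intro hi
      have hil : i ≤ l := Nat.le_of_succ_le hi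
      refine projDimLE_quotient i (E (i + 1))
        (ModuleCat.of R (LinearMap.range (f (i + 1)))) (f (i + 1)).rangeRestrict
        (f (i + 1)).surjective_rangeRestrict ?_ (hpd i hil)
      refine projDimLE_congr i (ModuleCat.of R ↥(LinearMap.range (f i)))
        (ModuleCat.of R ↥(LinearMap.ker (f (i + 1)).rangeRestrict))
        (LinearEquiv.ofEq _ _ ?_) (ih hil)
      rw [LinearMap.ker_rangeRestrict]
      exact hexact i hil
  refine projDimLE_quotient l (E (l + 1)) (E (l + 2)) (f (l + 1)) hsurj ?_ (hpd l le_rfl)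
  exact projDimLE_congr l (ModuleCat.of R ↥(LinearMap.range (f l)))
    (ModuleCat.of R ↥(LinearMap.ker (f (l + 1))))
    (LinearEquiv.ofEq _ _ (hexact l le_rfl)) (claim l le_rfl)
end

section
/- Let V₁ and V₂ be finite-dimensional complex vector spaces and T a Zariski-closed subset of V₁ × V₂ stable under (x, y) ↦ (x, t·y) for all nonzero complex t. Then the image S of T under the projection to V₁ is closed in V₁. -/
/-- A subset of `ℂᵏ` is Zariski closed if it is the common zero set of a family of
polynomials. -/
def IsZariskiClosed {k : ℕ} (S : Set (Fin k → ℂ)) : Prop :=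
  ∃ T : Set (MvPolynomial (Fin k) ℂ),
    S = {x | ∀ p ∈ T, MvPolynomial.eval x p = 0}

/-- A subset of `ℂᵐ × ℂⁿ` is Zariski closed if it is the common zero set of a family of
polynomials in `m + n` variables. -/
def IsZariskiClosedProd {m n : ℕ} (T : Set ((Fin m → ℂ) × (Fin n → ℂ))) : Prop :=
  ∃ P : Set (MvPolynomial (Fin m ⊕ Fin n) ℂ),
    T = {xy | ∀ p ∈ P, MvPolynomial.eval (Sum.elim xy.1 xy.2) p = 0}


lemma eval_subst_zero {m n : ℕ} (p : MvPolynomial (Fin m ⊕ Fin n) ℂ) (x : Fin m → ℂ) :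
    MvPolynomial.eval x (MvPolynomial.aeval
        (Sum.elim MvPolynomial.X (0 : Fin n → MvPolynomial (Fin m) ℂ)) p)
      = MvPolynomial.eval (Sum.elim x 0) p := by
  induction p using MvPolynomial.induction_on with
  | C a => simp
  | add p q hp hq => simp only [map_add, hp, hq]
  | mul_X p s hp =>
    cases s with
    | inl i => simp only [map_mul, MvPolynomial.aeval_X, Sum.elim_inl, MvPolynomial.eval_X, hp]
    | inr j => simp [hp]

lemma eval_line {m n : ℕ} (x : Fin m → ℂ) (y : Fin n → ℂ) (t : ℂ)
    (p : MvPolynomial (Fin m ⊕ Fin n) ℂ) :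
    Polynomial.eval t (MvPolynomial.aeval
        (Sum.elim (fun i => Polynomial.C (x i)) (fun j => Polynomial.C (y j) * Polynomial.X)) p)
      = MvPolynomial.eval (Sum.elim x (t • y)) p := by
  induction p using MvPolynomial.induction_on with
  | C a => simp
  | add p q hp hq => simp only [map_add, Polynomial.eval_add, hp, hq]
  | mul_X p s hp =>
    cases s with
    | inl i => simp [hp]
    | inr j =>
      simp only [map_mul, MvPolynomial.aeval_X, Sum.elim_inr, Polynomial.eval_mul,
        Polynomial.eval_C, Polynomial.eval_X, MvPolynomial.eval_X, hp, Pi.smul_apply,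
        smul_eq_mul]
      ring

lemma key {m n : ℕ} (p : MvPolynomial (Fin m ⊕ Fin n) ℂ) (x : Fin m → ℂ) (y : Fin n → ℂ)
    (h : ∀ t : ℂ, t ≠ 0 → MvPolynomial.eval (Sum.elim x (t • y)) p = 0) :
    MvPolynomial.eval (Sum.elim x (0 : Fin n → ℂ)) p = 0 := by
  have hq0 : (MvPolynomial.aeval
      (Sum.elim (fun i => Polynomial.C (x i)) (fun j => Polynomial.C (y j) * Polynomial.X)) p
        : Polynomial ℂ) = 0 := by
    apply Polynomial.eq_zero_of_infinite_isRoot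
    apply Set.Infinite.mono (s := {t : ℂ | t ≠ 0})
    · intro t ht
      simp only [Set.mem_setOf_eq, Polynomial.IsRoot]
      rw [eval_line]
      exact h t ht
    · have hc : ({t : ℂ | t ≠ 0} : Set ℂ)ᶜ = {0} := by ext t; simp
      exact Set.infinite_of_finite_compl (hc ▸ Set.finite_singleton 0)
  have := eval_line x y 0 p
  rw [hq0] at this
  simpa [zero_smul] using this.symm

/-- Let `V₁ = ℂᵐ` and `V₂ = ℂⁿ` and let `T` be a Zariski-closed subset of `V₁ × V₂` stable
under `(x, y) ↦ (x, t • y)` for all nonzero complex `t`.  Then the image `S` of `T` under the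
projection to `V₁` is Zariski closed in `V₁`. -/
theorem image_of_cone_isClosed {m n : ℕ}
    (T : Set ((Fin m → ℂ) × (Fin n → ℂ)))
    (hT : IsZariskiClosedProd T)
    (hstable : ∀ t : ℂ, t ≠ 0 → ∀ xy ∈ T, (xy.1, t • xy.2) ∈ T) :
    IsZariskiClosed (Prod.fst '' T) := by
  obtain ⟨P, hP⟩ := hT
  refine ⟨(MvPolynomial.aeval (Sum.elim MvPolynomial.X 0)) '' P, ?_⟩
  ext x
  simp only [Set.mem_image, Set.mem_setOf_eq]
  constructor
  · rintro ⟨⟨x', y⟩, hxy, rfl⟩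
    rintro q ⟨p, hp, rfl⟩
    rw [eval_subst_zero]
    apply key p _ y
    intro t ht
    have := hstable t ht _ hxy
    rw [hP] at this
    exact this p hp
  · intro hx
    refine ⟨(x, 0), ?_, rfl⟩
    rw [hP]
    intro p hp
    have := hx _ ⟨p, hp, rfl⟩
    rwa [eval_subst_zero] at this
end
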